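/- Let K = 2 (two sources). Suppose that for every internal edge of the labeled graph, every residing path of that edge contains at least one 1-color node (this hypothesis holds vacuously when the graph has no internal edge). Then for every prime p with p > 4·|E|, where |E| is the number of edges of the graph, there exists a storage code with source alphabet S = (Fin 4 → ZMod p) and coded alphabet T = (Fin 3 → ZMod p); in particular symbol rate 4/3 is achievable over such graphs. -/

import Mathlib

/-- A storage code problem over a labeled graph: `N` nodes, `K` sources, and a
symmetric labeling `t` of pairs of nodes by sources, with no self-loops. -/
structure LabeledGraph (N K : ℕ) where
  t : Fin N → Fin N → Option (Fin K)
  symm : ∀ i j, t i j = t j i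
  irrefl : ∀ i, t i i = none

/-- `V` is a storage code over `G`: from the coded symbols at the two endpoints of
any `W_k`-edge, the source symbol `W_k` can be decoded. -/
def IsStorageCode {N K : ℕ} (G : LabeledGraph N K) (S T : Type)
    (V : Fin N → (Fin K → S) → T) : Prop :=
  ∀ i j k, G.t i j = some k →
    ∃ D : T → T → S, ∀ w : Fin K → S, D (V i w) (V j w) = w k

/-- The set of source labels carried by the edges incident to node `i`. -/
def colorSet {N K : ℕ} (G : LabeledGraph N K) (i : Fin N) : Set (Fin K) :=
  {k | ∃ j, G.t i j = some k}

/-- Node `i` is `M`-color: its incident edges carry exactly `M` distinct labels. -/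
def IsMColor {N K : ℕ} (G : LabeledGraph N K) (i : Fin N) (M : ℕ) : Prop :=
  (colorSet G i).ncard = M
/-- A `W_k`-path: a sequence of `P ≥ 1` consecutive `W_k`-edges whose unordered
edges are pairwise distinct. -/
def IsPath {N K : ℕ} (G : LabeledGraph N K) (k : Fin K) (P : ℕ)
    (v : Fin (P + 1) → Fin N) : Prop :=
  1 ≤ P ∧ (∀ q : Fin P, G.t (v q.castSucc) (v q.succ) = some k) ∧
    Function.Injective (fun q : Fin P => s(v q.castSucc, v q.succ))
/-- The number of (unordered) edges of the labeled graph. -/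
noncomputable def edgeCount {N K : ℕ} (G : LabeledGraph N K) : ℕ :=
  {e : Sym2 (Fin N) | ∃ i j, e = s(i, j) ∧ G.t i j ≠ none}.ncard

namespace RateFT

variable {F : Type} [Field F]

/-- evaluation of the degree-3 polynomial with coefficients `x` at `t` -/
def P1 (t : F) (x : Fin 4 → F) : F := x 0 + t * x 1 + t^2 * x 2 + t^3 * x 3
/-- first derivative -/
def P2 (t : F) (x : Fin 4 → F) : F := x 1 + 2*t * x 2 + 3*t^2 * x 3
/-- second derivative -/
def P3 (t : F) (x : Fin 4 → F) : F := 2 * x 2 + 6*t * x 3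

lemma P1_sub (t : F) (x y : Fin 4 → F) : P1 t (x - y) = P1 t x - P1 t y := by
  simp only [P1, Pi.sub_apply]; ring

lemma P2_sub (t : F) (x y : Fin 4 → F) : P2 t (x - y) = P2 t x - P2 t y := by
  simp only [P2, Pi.sub_apply]; ring

lemma P3_sub (t : F) (x y : Fin 4 → F) : P3 t (x - y) = P3 t x - P3 t y := by
  simp only [P3, Pi.sub_apply]; ring

lemma quad_zero {t s : F} (hts : t ≠ s) {x : Fin 4 → F}
    (h1 : P1 t x = 0) (h2 : P2 t x = 0) (h3 : P1 s x = 0) (h4 : P2 s x = 0) : x = 0 := by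
  have hd : t - s ≠ 0 := sub_ne_zero.mpr hts
  rw [P1] at h1 h3; rw [P2] at h2 h4
  have E2 : x 1 + (t+s) * x 2 + (t^2 + t*s + s^2) * x 3 = 0 := by
    apply mul_left_cancel₀ hd; rw [mul_zero]; linear_combination h1 - h3
  have E3 : x 2 + (2*t+s) * x 3 = 0 := by
    apply mul_left_cancel₀ hd; rw [mul_zero]; linear_combination h2 - E2
  have E1 : 2 * x 2 + 3*(t+s) * x 3 = 0 := by
    apply mul_left_cancel₀ hd; rw [mul_zero]; linear_combination h2 - h4
  have hx3 : x 3 = 0 := by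
    have hd' : s - t ≠ 0 := sub_ne_zero.mpr (Ne.symm hts)
    apply mul_left_cancel₀ hd'; rw [mul_zero]; linear_combination E1 - 2*E3
  have hx2 : x 2 = 0 := by linear_combination E3 - (2*t+s) * hx3
  have hx1 : x 1 = 0 := by linear_combination E2 - (t+s)*hx2 - (t^2+t*s+s^2)*hx3
  have hx0 : x 0 = 0 := by linear_combination h1 - t*hx1 - t^2*hx2 - t^3*hx3
  funext i
  fin_cases i <;> simp only [Pi.zero_apply] <;> assumption

lemma cube_span (h2 : (2:F) ≠ 0) {s : F} {x : Fin 4 → F}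
    (e1 : P1 s x = 0) (e2 : P2 s x = 0) (e3 : P3 s x = 0) :
    x 2 = -(3*s) * x 3 ∧ x 1 = 3*s^2 * x 3 ∧ x 0 = -s^3 * x 3 := by
  rw [P1] at e1; rw [P2] at e2; rw [P3] at e3
  have hx2 : x 2 = -(3*s) * x 3 := by
    apply mul_left_cancel₀ h2; linear_combination e3
  have hx1 : x 1 = 3*s^2 * x 3 := by linear_combination e2 - 2*s*hx2
  have hx0 : x 0 = -s^3 * x 3 := by linear_combination e1 - s*hx1 - s^2*hx2
  exact ⟨hx2, hx1, hx0⟩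

lemma triple_triple (h2 : (2:F) ≠ 0) (h3 : (3:F) ≠ 0) {s s' : F} (hss : s ≠ s') {x : Fin 4 → F}
    (a1 : P1 s x = 0) (a2 : P2 s x = 0) (a3 : P3 s x = 0)
    (b1 : P1 s' x = 0) (b2 : P2 s' x = 0) (b3 : P3 s' x = 0) : x = 0 := by
  obtain ⟨c2, c1, c0⟩ := cube_span h2 a1 a2 a3
  obtain ⟨d2, d1, d0⟩ := cube_span h2 b1 b2 b3
  have hx3 : x 3 = 0 := by
    have hd : s' - s ≠ 0 := sub_ne_zero.mpr (Ne.symm hss)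
    apply mul_left_cancel₀ hd; rw [mul_zero]
    apply mul_left_cancel₀ h3; rw [mul_zero]
    linear_combination d2 - c2
  have hx2 : x 2 = 0 := by linear_combination c2 - 3*s*hx3
  have hx1 : x 1 = 0 := by linear_combination c1 + 3*s^2*hx3
  have hx0 : x 0 = 0 := by linear_combination c0 - s^3*hx3
  funext i
  fin_cases i <;> simp only [Pi.zero_apply] <;> assumption

lemma one_two (h2 : (2:F) ≠ 0) {s t cc : F} (hst : t ≠ s) (hc : (t - s) + 3*cc ≠ 0)
    {x : Fin 4 → F}
    (a1 : P1 s x = 0) (a2 : P2 s x = 0) (a3 : P3 s x = 0)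
    (e : P1 t x + cc * P2 t x = 0) : x = 0 := by
  obtain ⟨c2, c1, c0⟩ := cube_span h2 a1 a2 a3
  have key : (t - s)^2 * (((t-s) + 3*cc) * x 3) = 0 := by
    rw [P1, P2] at e
    linear_combination e - c0 - (t+cc)*c1 - (t^2+2*t*cc)*c2
  have hd : (t - s)^2 ≠ 0 := pow_ne_zero _ (sub_ne_zero.mpr hst)
  have step1 : ((t-s) + 3*cc) * x 3 = 0 := by
    apply mul_left_cancel₀ hd; rw [mul_zero]; exact key
  have hx3 : x 3 = 0 := by
    apply mul_left_cancel₀ hc; rw [mul_zero]; exact step1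
  have hx2 : x 2 = 0 := by linear_combination c2 - 3*s*hx3
  have hx1 : x 1 = 0 := by linear_combination c1 + 3*s^2*hx3
  have hx0 : x 0 = 0 := by linear_combination c0 - s^3*hx3
  funext i
  fin_cases i <;> simp only [Pi.zero_apply] <;> assumption

lemma two_two {t t' u cc cc' : F} (htt : t ≠ t') (hcc : cc ≠ cc') {x y : Fin 4 → F}
    (e1 : P1 t x + cc * P2 t x = 0) (e2 : P1 u y + cc * P2 u y = 0)
    (e3 : P2 t x + P2 u y = 0)
    (f1 : P1 t' x + cc' * P2 t' x = 0) (f2 : P1 u y + cc' * P2 u y = 0)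
    (f3 : P2 t' x + P2 u y = 0) : x = 0 := by
  have hPu : P2 u y = 0 := by
    have h : (cc - cc') * P2 u y = 0 := by linear_combination e2 - f2
    rcases mul_eq_zero.mp h with h' | h'
    · exact absurd (sub_eq_zero.mp h') hcc
    · exact h'
  have h2t : P2 t x = 0 := by linear_combination e3 - hPu
  have h2t' : P2 t' x = 0 := by linear_combination f3 - hPu
  have h1t : P1 t x = 0 := by linear_combination e1 - cc * h2t
  have h1t' : P1 t' x = 0 := by linear_combination f1 - cc' * h2t'
  exact quad_zero htt h1t h2t h1t' h2t'



variable {N : ℕ} (G : LabeledGraph N 2)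

/-- node has an incident edge of color `k` -/
def hasC (k : Fin 2) (i : Fin N) : Prop := ∃ j, G.t i j = some k

def twoP (i : Fin N) : Prop := hasC G 0 i ∧ hasC G 1 i

def one0P (i : Fin N) : Prop := hasC G 0 i ∧ ¬ hasC G 1 i
def one1P (i : Fin N) : Prop := hasC G 1 i ∧ ¬ hasC G 0 i

lemma twoP_not_one {i : Fin N} (h : twoP G i) : ¬ IsMColor G i 1 := by
  have huniv : colorSet G i = Set.univ := by
    apply Set.eq_univ_of_forall
    intro k
    have : k = 0 ∨ k = 1 := by omega
    rcases this with rfl | rfl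
    · exact h.1
    · exact h.2
  intro hm
  rw [IsMColor, huniv, Set.ncard_univ, Nat.card_eq_fintype_card, Fintype.card_fin] at hm
  omega

/-- the simple graph of color-`k` edges between 2-color nodes -/
def SG (k : Fin 2) : SimpleGraph (Fin N) where
  Adj a b := a ≠ b ∧ twoP G a ∧ twoP G b ∧ G.t a b = some k
  symm := by
    constructor
    rintro a b ⟨h1, h2, h3, h4⟩
    exact ⟨h1.symm, h3, h2, by rw [← G.symm]; exact h4⟩
  loopless := by constructor; rintro a ⟨h1, -⟩; exact h1 rfl

lemma getVert_inj {V' : Type*} {G' : SimpleGraph V'} {u v : V'} (w : G'.Walk u v)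
    (hw : w.IsPath) : ∀ m n, m ≤ w.length → n ≤ w.length →
      w.getVert m = w.getVert n → m = n := by
  induction w with
  | nil => intro m n hm hn _; simp only [SimpleGraph.Walk.length_nil] at hm hn; omega
  | @cons a b c h q ih =>
    intro m n hm hn he
    rw [SimpleGraph.Walk.cons_isPath_iff] at hw
    rw [SimpleGraph.Walk.length_cons] at hm hn
    match m, n with
    | 0, 0 => rfl
    | 0, (n' + 1) =>
      exfalso
      apply hw.2
      rw [SimpleGraph.Walk.getVert_cons_succ, SimpleGraph.Walk.getVert_zero] at he
      rw [SimpleGraph.Walk.mem_support_iff_exists_getVert]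
      exact ⟨n', he.symm, by omega⟩
    | (m' + 1), 0 =>
      exfalso
      apply hw.2
      rw [SimpleGraph.Walk.getVert_cons_succ, SimpleGraph.Walk.getVert_zero] at he
      rw [SimpleGraph.Walk.mem_support_iff_exists_getVert]
      exact ⟨m', he, by omega⟩
    | (m' + 1), (n' + 1) =>
      rw [SimpleGraph.Walk.getVert_cons_succ, SimpleGraph.Walk.getVert_cons_succ] at he
      have := ih hw.1 m' n' (by omega) (by omega) he
      omega

lemma reach_two {k : Fin 2} {a b : Fin N} (h : (SG G k).Reachable a b) :
    a = b ∨ twoP G b := by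
  rw [SimpleGraph.reachable_iff_reflTransGen] at h
  induction h with
  | refl => exact Or.inl rfl
  | tail _ hadj _ => exact Or.inr hadj.2.2.1

lemma not_reachable
    (hres : ∀ i j k, G.t i j = some k → ∀ k', k' ≠ k →
      ∀ P (v : Fin (P + 1) → Fin N), IsPath G k' P v →
        v 0 = i → v (Fin.last P) = j → ∃ q : Fin (P + 1), IsMColor G (v q) 1)
    {k k' : Fin 2} (hkk : k' ≠ k) {i j : Fin N} (hij : G.t i j = some k)
    (hreach : (SG G k').Reachable i j) : False := by
  obtain ⟨w⟩ := hreach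
  have hqp : w.bypass.IsPath := SimpleGraph.Walk.bypass_isPath w
  set q : (SG G k').Walk i j := w.bypass with hq
  have hne : i ≠ j := by
    intro h
    rw [h, G.irrefl] at hij
    exact absurd hij (by simp)
  have hP : 1 ≤ q.length := by
    rcases Nat.eq_zero_or_pos q.length with h0 | h1
    · exact absurd (SimpleGraph.Walk.eq_of_length_eq_zero h0) hne
    · exact h1
  have hstep : ∀ r : ℕ, r < q.length →
      (SG G k').Adj (q.getVert r) (q.getVert (r+1)) :=
    fun r hr => q.adj_getVert_succ hr
  have htwo : ∀ r : ℕ, r ≤ q.length → twoP G (q.getVert r) := by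
    intro r hr
    match r with
    | 0 => exact (hstep 0 hP).2.1
    | (r' + 1) => exact (hstep r' (by omega)).2.2.1
  have hIs : IsPath G k' q.length (fun r : Fin (q.length + 1) => q.getVert r) := by
    refine ⟨hP, ?_, ?_⟩
    · intro r
      have := (hstep r r.isLt).2.2.2
      simpa using this
    · intro a b hab
      simp only [Fin.coe_castSucc, Fin.val_succ] at hab
      rw [Sym2.eq_iff] at hab
      rcases hab with ⟨h1, _⟩ | ⟨h1, h2⟩
      · have := getVert_inj q hqp a b (by omega) (by omega) h1
        exact Fin.ext this
      · have e1 := getVert_inj q hqp a (b+1) (by omega) (by omega) h1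
        have e2 := getVert_inj q hqp (a+1) b (by omega) (by omega) h2
        omega
  obtain ⟨r, hr⟩ := hres i j k hij k' hkk q.length _ hIs
    (by simp) (by simp)
  exact twoP_not_one G (htwo r (by omega)) hr



lemma exists_good {N p : ℕ} [NeZero p] (R : Fin N → Prop) [DecidablePred R] (Bad : Fin N → Finset (ZMod p))
    (h : ∀ i, R i → ((Finset.univ.filter fun i => R i).card + (Bad i).card < p)) :
    ∃ c : Fin N → ZMod p, Set.InjOn c {i | R i} ∧ ∀ i, R i → c i ∉ Bad i := by
  classical
  suffices H : ∀ s : Finset (Fin N), ∃ c : Fin N → ZMod p,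
      Set.InjOn c {i | i ∈ s ∧ R i} ∧ ∀ i ∈ s, R i → c i ∉ Bad i by
    obtain ⟨c, hinj, hbad⟩ := H Finset.univ
    refine ⟨c, ?_, fun i hi => hbad i (Finset.mem_univ i) hi⟩
    intro a ha b hb hab
    exact hinj ⟨Finset.mem_univ a, ha⟩ ⟨Finset.mem_univ b, hb⟩ hab
  intro s
  induction s using Finset.induction_on with
  | empty => exact ⟨0, by simp [Set.InjOn], by simp⟩
  | @insert a s ha ih =>
    obtain ⟨c, hinj, hbad⟩ := ih
    by_cases hRa : R a
    · -- choose a fresh value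
      set T : Finset (ZMod p) :=
        ((s.filter fun i => R i).image c) ∪ Bad a with hT
      have hTcard : T.card < p := by
        calc T.card ≤ ((s.filter fun i => R i).image c).card + (Bad a).card :=
              Finset.card_union_le _ _
          _ ≤ (s.filter fun i => R i).card + (Bad a).card := by
              gcongr; exact Finset.card_image_le
          _ ≤ (Finset.univ.filter fun i => R i).card + (Bad a).card :=
              Nat.add_le_add_right (Finset.card_le_card
                (Finset.filter_subset_filter _ (Finset.subset_univ s))) _
          _ < p := h a hRa
      have hcompl : (Tᶜ : Finset (ZMod p)).Nonempty := by
        rw [← Finset.card_pos, Finset.card_compl]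
        have : Fintype.card (ZMod p) = p := ZMod.card p
        omega
      obtain ⟨v, hv⟩ := hcompl
      rw [Finset.mem_compl] at hv
      refine ⟨Function.update c a v, ?_, ?_⟩
      · intro x hx y hy hxy
        simp only [Set.mem_setOf_eq, Finset.mem_insert] at hx hy
        rcases hx with ⟨hx1 | hx1, hx2⟩ <;> rcases hy with ⟨hy1 | hy1, hy2⟩
        · rw [hx1, hy1]
        · subst hx1
          rw [Function.update_self] at hxy
          have hyne : y ≠ x := fun hc => ha (hc ▸ hy1)
          rw [Function.update_of_ne hyne] at hxy
          exfalso; apply hv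
          rw [hT]
          apply Finset.mem_union_left
          exact hxy ▸ Finset.mem_image_of_mem c (Finset.mem_filter.mpr ⟨hy1, hy2⟩)
        · subst hy1
          rw [Function.update_self] at hxy
          have hxne : x ≠ y := fun hc => ha (hc ▸ hx1)
          rw [Function.update_of_ne hxne] at hxy
          exfalso; apply hv
          rw [hT]
          apply Finset.mem_union_left
          exact hxy ▸ Finset.mem_image_of_mem c (Finset.mem_filter.mpr ⟨hx1, hx2⟩)
        · have hxne : x ≠ a := fun hc => ha (hc ▸ hx1)
          have hyne : y ≠ a := fun hc => ha (hc ▸ hy1)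
          rw [Function.update_of_ne hxne, Function.update_of_ne hyne] at hxy
          exact hinj ⟨hx1, hx2⟩ ⟨hy1, hy2⟩ hxy
      · intro i hi hRi
        rcases Finset.mem_insert.mp hi with rfl | his
        · rw [Function.update_self]
          intro hmem
          exact hv (Finset.mem_union_right _ hmem)
        · have hine : i ≠ a := fun hc => ha (hc ▸ his)
          rw [Function.update_of_ne hine]
          exact hbad i his hRi
    · refine ⟨c, ?_, ?_⟩
      · intro x hx y hy hxy
        simp only [Set.mem_setOf_eq, Finset.mem_insert] at hx hy
        rcases hx with ⟨hx1 | hx1, hx2⟩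
        · exact absurd (hx1 ▸ hx2) hRa
        rcases hy with ⟨hy1 | hy1, hy2⟩
        · exact absurd (hy1 ▸ hy2) hRa
        exact hinj ⟨hx1, hx2⟩ ⟨hy1, hy2⟩ hxy
      · intro i hi hRi
        rcases Finset.mem_insert.mp hi with rfl | his
        · exact absurd hRi hRa
        · exact hbad i his hRi



variable {N : ℕ} (G : LabeledGraph N 2)

/-- the finset of edges -/
noncomputable def Efin : Finset (Sym2 (Fin N)) := by
  classical
  exact (Finset.univ.filter (fun ij : Fin N × Fin N => G.t ij.1 ij.2 ≠ none)).image
    (fun ij => s(ij.1, ij.2))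

lemma mem_Efin {i j : Fin N} (h : G.t i j ≠ none) : s(i, j) ∈ Efin G := by
  classical
  rw [Efin]
  simp only [Finset.mem_image, Finset.mem_filter, Finset.mem_univ, true_and]
  exact ⟨(i, j), h, rfl⟩

lemma edgeCount_eq : edgeCount G = (Efin G).card := by
  classical
  have hset : {e : Sym2 (Fin N) | ∃ i j, e = s(i, j) ∧ G.t i j ≠ none} = ↑(Efin G) := by
    ext e
    simp only [Set.mem_setOf_eq, Finset.coe_image, Set.mem_image, Finset.mem_coe,
      Finset.mem_filter, Finset.mem_univ, true_and, Efin]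
    constructor
    · rintro ⟨i, j, rfl, h⟩
      exact ⟨(i, j), h, rfl⟩
    · rintro ⟨⟨i, j⟩, h, rfl⟩
      exact ⟨i, j, rfl, h⟩
  rw [edgeCount, hset, Set.ncard_coe_finset]

/-- finset of non-isolated nodes -/
noncomputable def NIfin : Finset (Fin N) := by
  classical
  exact Finset.univ.filter (fun i => ∃ j, G.t i j ≠ none)

lemma mem_NIfin {i : Fin N} (h : ∃ j, G.t i j ≠ none) : i ∈ NIfin G := by
  classical
  rw [NIfin]; simpa using h

lemma NIcard : (NIfin G).card ≤ 2 * (Efin G).card := by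
  classical
  set f : Fin N → Sym2 (Fin N) :=
    fun i => if h : ∃ j, G.t i j ≠ none then s(i, h.choose) else s(i, i) with hf
  have hmem : ∀ i, i ∈ f i := by
    intro i
    show i ∈ if h : ∃ j, G.t i j ≠ none then s(i, h.choose) else s(i, i)
    split
    · exact Sym2.mem_mk_left _ _
    · exact Sym2.mem_mk_left _ _
  have key : ∀ a ∈ (NIfin G).image f, ((NIfin G).filter fun x => f x = a).card ≤ 2 := by
    intro a _
    induction a using Sym2.ind with
    | _ u v =>
      refine le_trans (Finset.card_le_card (t := ({u, v} : Finset (Fin N))) ?_) ?_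
      · intro x hx
        rw [Finset.mem_filter] at hx
        have hx2 : x ∈ s(u, v) := hx.2 ▸ hmem x
        rw [Sym2.mem_iff] at hx2
        simp only [Finset.mem_insert, Finset.mem_singleton]
        exact hx2
      · exact le_trans (Finset.card_insert_le u {v}) (by simp)
  have himg : (NIfin G).image f ⊆ Efin G := by
    intro a ha
    obtain ⟨i, hi, rfl⟩ := Finset.mem_image.mp ha
    have h' : ∃ j, G.t i j ≠ none := by
      have := hi; rw [NIfin] at this; simpa using this
    show (if h : ∃ j, G.t i j ≠ none then s(i, h.choose) else s(i, i)) ∈ Efin G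
    rw [dif_pos h']
    exact mem_Efin G h'.choose_spec
  calc (NIfin G).card ≤ 2 * ((NIfin G).image f).card :=
        Finset.card_le_mul_card_image _ 2 key
    _ ≤ 2 * (Efin G).card := Nat.mul_le_mul_left _ (Finset.card_le_card himg)

lemma nbr_card (i : Fin N) (Q0 Q1 : Fin N → Prop) [DecidablePred Q0] [DecidablePred Q1] :
    (Finset.univ.filter fun j => G.t i j = some 0 ∧ Q0 j).card
      + (Finset.univ.filter fun j => G.t i j = some 1 ∧ Q1 j).card ≤ (Efin G).card := by
  classical
  set s0 := Finset.univ.filter fun j => G.t i j = some 0 ∧ Q0 j with hs0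
  set s1 := Finset.univ.filter fun j => G.t i j = some 1 ∧ Q1 j with hs1
  have hdisj : Disjoint s0 s1 := by
    rw [Finset.disjoint_left]
    intro a h0 h1
    rw [hs0, Finset.mem_filter] at h0
    rw [hs1, Finset.mem_filter] at h1
    have := h0.2.1.symm.trans h1.2.1
    simp at this
  rw [← Finset.card_union_of_disjoint hdisj]
  apply Finset.card_le_card_of_injOn (fun j => s(i, j))
  · intro j hj
    rw [Finset.mem_coe, Finset.mem_union, hs0, hs1, Finset.mem_filter, Finset.mem_filter] at hj
    have : G.t i j ≠ none := by
      rcases hj with ⟨-, h, -⟩ | ⟨-, h, -⟩ <;> simp [h]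
    exact mem_Efin G this
  · intro a _ b _ hab
    simpa only [Sym2.congr_right] using hab

lemma out_reach (k : Fin 2) (i : Fin N) :
    (SG G k).Reachable i ((SG G k).connectedComponentMk i).out := by
  have h : (SG G k).connectedComponentMk (((SG G k).connectedComponentMk i).out)
      = (SG G k).connectedComponentMk i := Quot.out_eq _
  exact (SimpleGraph.ConnectedComponent.eq.mp h).symm

lemma two_out {k : Fin 2} {i : Fin N} (h : twoP G i) :
    twoP G (((SG G k).connectedComponentMk i).out) := by
  rcases reach_two G (out_reach G k i) with heq | h2
  · exact heq ▸ h
  · exact h2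

lemma twoP_NI {i : Fin N} (h : twoP G i) : ∃ j, G.t i j ≠ none := by
  obtain ⟨j, hj⟩ := h.1
  exact ⟨j, by simp [hj]⟩

variable {p : ℕ} (ψ : Fin N → ZMod p)

noncomputable def tA (i : Fin N) : ZMod p := ψ ((SG G 1).connectedComponentMk i).out
noncomputable def tB (i : Fin N) : ZMod p := ψ ((SG G 0).connectedComponentMk i).out

lemma tA_eq_of_adj {i j : Fin N} (h2i : twoP G i) (h2j : twoP G j) (hne : i ≠ j)
    (hij : G.t i j = some 1) : tA G ψ i = tA G ψ j := by
  have h : (SG G 1).connectedComponentMk i = (SG G 1).connectedComponentMk j :=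
    SimpleGraph.ConnectedComponent.connectedComponentMk_eq_of_adj ⟨hne, h2i, h2j, hij⟩
  rw [tA, tA, h]

lemma tB_eq_of_adj {i j : Fin N} (h2i : twoP G i) (h2j : twoP G j) (hne : i ≠ j)
    (hij : G.t i j = some 0) : tB G ψ i = tB G ψ j := by
  have h : (SG G 0).connectedComponentMk i = (SG G 0).connectedComponentMk j :=
    SimpleGraph.ConnectedComponent.connectedComponentMk_eq_of_adj ⟨hne, h2i, h2j, hij⟩
  rw [tB, tB, h]


lemma tA_ne (hψ : Set.InjOn ψ {i | ∃ j, G.t i j ≠ none})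
    (hres : ∀ i j k, G.t i j = some k → ∀ k', k' ≠ k →
      ∀ P (v : Fin (P + 1) → Fin N), IsPath G k' P v →
        v 0 = i → v (Fin.last P) = j → ∃ q : Fin (P + 1), IsMColor G (v q) 1)
    {i j : Fin N} (h2i : twoP G i) (h2j : twoP G j)
    (hij : G.t i j = some 0) : tA G ψ i ≠ tA G ψ j := by
  intro heq
  have heqo := hψ (Set.mem_setOf.mpr (twoP_NI G (two_out G h2i)))
    (Set.mem_setOf.mpr (twoP_NI G (two_out G h2j))) heq
  have hcomp : (SG G 1).connectedComponentMk i = (SG G 1).connectedComponentMk j := by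
    calc (SG G 1).connectedComponentMk i
        = (SG G 1).connectedComponentMk (((SG G 1).connectedComponentMk i).out) :=
          (Quot.out_eq _).symm
      _ = (SG G 1).connectedComponentMk (((SG G 1).connectedComponentMk j).out) := by
          rw [heqo]
      _ = (SG G 1).connectedComponentMk j := Quot.out_eq _
  exact not_reachable G hres (k := 0) (k' := 1) (by decide) hij
    (SimpleGraph.ConnectedComponent.eq.mp hcomp)

lemma tB_ne (hψ : Set.InjOn ψ {i | ∃ j, G.t i j ≠ none})
    (hres : ∀ i j k, G.t i j = some k → ∀ k', k' ≠ k →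
      ∀ P (v : Fin (P + 1) → Fin N), IsPath G k' P v →
        v 0 = i → v (Fin.last P) = j → ∃ q : Fin (P + 1), IsMColor G (v q) 1)
    {i j : Fin N} (h2i : twoP G i) (h2j : twoP G j)
    (hij : G.t i j = some 1) : tB G ψ i ≠ tB G ψ j := by
  intro heq
  have heqo := hψ (Set.mem_setOf.mpr (twoP_NI G (two_out G h2i)))
    (Set.mem_setOf.mpr (twoP_NI G (two_out G h2j))) heq
  have hcomp : (SG G 0).connectedComponentMk i = (SG G 0).connectedComponentMk j := by
    calc (SG G 0).connectedComponentMk i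
        = (SG G 0).connectedComponentMk (((SG G 0).connectedComponentMk i).out) :=
          (Quot.out_eq _).symm
      _ = (SG G 0).connectedComponentMk (((SG G 0).connectedComponentMk j).out) := by
          rw [heqo]
      _ = (SG G 0).connectedComponentMk j := Quot.out_eq _
  exact not_reachable G hres (k := 1) (k' := 0) (by decide) hij
    (SimpleGraph.ConnectedComponent.eq.mp hcomp)

lemma tA_ne_psi (hψ : Set.InjOn ψ {i | ∃ j, G.t i j ≠ none}) {i j : Fin N} (h2i : twoP G i) (hj : ¬ twoP G j)
    (hNIj : ∃ j', G.t j j' ≠ none) : tA G ψ i ≠ ψ j := by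
  intro heq
  have heqo := hψ (Set.mem_setOf.mpr (twoP_NI G (two_out G h2i)))
    (Set.mem_setOf.mpr hNIj) heq
  exact hj (heqo ▸ two_out G h2i)

lemma tB_ne_psi (hψ : Set.InjOn ψ {i | ∃ j, G.t i j ≠ none}) {i j : Fin N} (h2i : twoP G i) (hj : ¬ twoP G j)
    (hNIj : ∃ j', G.t j j' ≠ none) : tB G ψ i ≠ ψ j := by
  intro heq
  have heqo := hψ (Set.mem_setOf.mpr (twoP_NI G (two_out G h2i)))
    (Set.mem_setOf.mpr hNIj) heq
  exact hj (heqo ▸ two_out G h2i)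


end RateFT

/-- with `K = 2` sources, if every residing path of every internal edge
contains a `1`-color node (vacuously true when no internal edge exists), then for every
prime `p > 4|E|` there is a storage code with `S = (Fin 4 → ZMod p)`,
`T = (Fin 3 → ZMod p)`, i.e. rate `4/3` is achievable. -/

theorem rate_four_thirds_achievable {N : ℕ} (G : LabeledGraph N 2)
    (hres : ∀ i j k, G.t i j = some k → ∀ k', k' ≠ k →
      ∀ P (v : Fin (P + 1) → Fin N), IsPath G k' P v →
        v 0 = i → v (Fin.last P) = j → ∃ q : Fin (P + 1), IsMColor G (v q) 1)
    (p : ℕ) (hp : p.Prime) (hpE : 4 * edgeCount G < p) :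
    ∃ V : Fin N → (Fin 2 → (Fin 4 → ZMod p)) → (Fin 3 → ZMod p),
      IsStorageCode G (Fin 4 → ZMod p) (Fin 3 → ZMod p) V := by
  classical
  haveI : Fact p.Prime := ⟨hp⟩
  haveI : NeZero p := ⟨hp.ne_zero⟩
  rw [RateFT.edgeCount_eq G] at hpE
  obtain ⟨ψ, hψ, -⟩ := RateFT.exists_good (p := p) (fun i => ∃ j, G.t i j ≠ none)
    (fun _ => ∅) (by
      intro i _
      have h2 : (Finset.univ.filter fun i => ∃ j, G.t i j ≠ none).card
          ≤ 2 * (RateFT.Efin G).card := by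
        have e : (Finset.univ.filter fun i => ∃ j, G.t i j ≠ none) = RateFT.NIfin G := by
          ext x; simp [RateFT.NIfin]
        rw [e]; exact RateFT.NIcard G
      simp only [Finset.card_empty]
      omega)
  obtain ⟨c, hcinj, hcbad⟩ := RateFT.exists_good (p := p) (RateFT.twoP G)
    (fun i =>
      ((Finset.univ.filter fun j => G.t i j = some 0 ∧ RateFT.one0P G j).image
        (fun j => (ψ j - RateFT.tA G ψ i) * 3⁻¹))
      ∪ ((Finset.univ.filter fun j => G.t i j = some 1 ∧ RateFT.one1P G j).image
        (fun j => (ψ j - RateFT.tB G ψ i) * 3⁻¹)))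
    (by
      intro i _
      have hA : (Finset.univ.filter fun i => RateFT.twoP G i).card
          ≤ 2 * (RateFT.Efin G).card := by
        refine le_trans (Finset.card_le_card ?_) (RateFT.NIcard G)
        intro x hx
        rw [Finset.mem_filter] at hx
        exact RateFT.mem_NIfin G (RateFT.twoP_NI G hx.2)
      refine lt_of_le_of_lt (Nat.add_le_add hA
        (le_trans (Finset.card_union_le _ _)
          (le_trans (Nat.add_le_add Finset.card_image_le Finset.card_image_le)
            (RateFT.nbr_card G i _ _)))) ?_
      omega)
  set Vf : Fin N → (Fin 2 → (Fin 4 → ZMod p)) → (Fin 3 → ZMod p) := fun i w =>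
    if RateFT.twoP G i then
      ![RateFT.P1 (RateFT.tA G ψ i) (w 0) + c i * RateFT.P2 (RateFT.tA G ψ i) (w 0),
        RateFT.P1 (RateFT.tB G ψ i) (w 1) + c i * RateFT.P2 (RateFT.tB G ψ i) (w 1),
        RateFT.P2 (RateFT.tA G ψ i) (w 0) + RateFT.P2 (RateFT.tB G ψ i) (w 1)]
    else if RateFT.one0P G i then
      ![RateFT.P1 (ψ i) (w 0), RateFT.P2 (ψ i) (w 0), RateFT.P3 (ψ i) (w 0)]
    else if RateFT.one1P G i then
      ![RateFT.P1 (ψ i) (w 1), RateFT.P2 (ψ i) (w 1), RateFT.P3 (ψ i) (w 1)]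
    else 0 with hVf
  have key : ∀ a b k, G.t a b = some k → ∀ w w' : Fin 2 → (Fin 4 → ZMod p),
      Vf a w = Vf a w' → Vf b w = Vf b w' → w k = w' k := by
    intro a b k hk w w' hVa hVb
    have hkba : G.t b a = some k := (G.symm b a).trans hk
    have hne : a ≠ b := by
      intro h; rw [h, G.irrefl] at hk; exact absurd hk (by simp)
    have hE1 : 1 ≤ (RateFT.Efin G).card :=
      Finset.card_pos.mpr ⟨s(a, b), RateFT.mem_Efin G (by simp [hk])⟩
    have hp4 : 4 < p := by omega
    have h2 : (2 : ZMod p) ≠ 0 := by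
      intro h0
      have h0' : ((2 : ℕ) : ZMod p) = 0 := by exact_mod_cast h0
      have hd := (ZMod.natCast_eq_zero_iff 2 p).mp h0'
      have := Nat.le_of_dvd (by norm_num) hd
      omega
    have h3 : (3 : ZMod p) ≠ 0 := by
      intro h0
      have h0' : ((3 : ℕ) : ZMod p) = 0 := by exact_mod_cast h0
      have hd := (ZMod.natCast_eq_zero_iff 3 p).mp h0'
      have := Nat.le_of_dvd (by norm_num) hd
      omega
    simp only [hVf] at hVa hVb
    fin_cases k
    · -- color 0
      have hca : RateFT.hasC G 0 a := ⟨b, hk⟩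
      have hcb : RateFT.hasC G 0 b := ⟨a, hkba⟩
      by_cases h2a : RateFT.twoP G a <;> by_cases h2b : RateFT.twoP G b
      · -- two / two
        simp only [if_pos h2a] at hVa
        simp only [if_pos h2b] at hVb
        have e0 := congrFun hVa 0
        have e1 := congrFun hVa 1
        have e2 := congrFun hVa 2
        have f0 := congrFun hVb 0
        have f1 := congrFun hVb 1
        have f2 := congrFun hVb 2
        simp only [Matrix.cons_val_zero, Matrix.cons_val_one, Matrix.head_cons,
          Matrix.cons_val_two, Matrix.tail_cons] at e0 e1 e2 f0 f1 f2
        have E0 : RateFT.P1 (RateFT.tA G ψ a) (w 0 - w' 0)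
            + c a * RateFT.P2 (RateFT.tA G ψ a) (w 0 - w' 0) = 0 := by
          rw [RateFT.P1_sub, RateFT.P2_sub]; linear_combination e0
        have E1 : RateFT.P1 (RateFT.tB G ψ a) (w 1 - w' 1)
            + c a * RateFT.P2 (RateFT.tB G ψ a) (w 1 - w' 1) = 0 := by
          rw [RateFT.P1_sub, RateFT.P2_sub]; linear_combination e1
        have E2 : RateFT.P2 (RateFT.tA G ψ a) (w 0 - w' 0)
            + RateFT.P2 (RateFT.tB G ψ a) (w 1 - w' 1) = 0 := by
          rw [RateFT.P2_sub, RateFT.P2_sub]; linear_combination e2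
        have htB : RateFT.tB G ψ a = RateFT.tB G ψ b :=
          RateFT.tB_eq_of_adj G ψ h2a h2b hne hk
        have F0 : RateFT.P1 (RateFT.tA G ψ b) (w 0 - w' 0)
            + c b * RateFT.P2 (RateFT.tA G ψ b) (w 0 - w' 0) = 0 := by
          rw [RateFT.P1_sub, RateFT.P2_sub]; linear_combination f0
        have F1 : RateFT.P1 (RateFT.tB G ψ a) (w 1 - w' 1)
            + c b * RateFT.P2 (RateFT.tB G ψ a) (w 1 - w' 1) = 0 := by
          rw [htB, RateFT.P1_sub, RateFT.P2_sub]; linear_combination f1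
        have F2 : RateFT.P2 (RateFT.tA G ψ b) (w 0 - w' 0)
            + RateFT.P2 (RateFT.tB G ψ a) (w 1 - w' 1) = 0 := by
          rw [htB, RateFT.P2_sub, RateFT.P2_sub]; linear_combination f2
        have htA : RateFT.tA G ψ a ≠ RateFT.tA G ψ b :=
          RateFT.tA_ne G ψ hψ hres h2a h2b hk
        have hcc : c a ≠ c b := fun h => hne (hcinj h2a h2b h)
        exact sub_eq_zero.mp (RateFT.two_two htA hcc E0 E1 E2 F0 F1 F2)
      · -- two / one0
        have h1b : RateFT.one0P G b := ⟨hcb, fun h1 => h2b ⟨hcb, h1⟩⟩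
        simp only [if_pos h2a] at hVa
        simp only [if_neg h2b, if_pos h1b] at hVb
        have e0 := congrFun hVa 0
        have f0 := congrFun hVb 0
        have f1 := congrFun hVb 1
        have f2 := congrFun hVb 2
        simp only [Matrix.cons_val_zero, Matrix.cons_val_one, Matrix.head_cons,
          Matrix.cons_val_two, Matrix.tail_cons] at e0 f0 f1 f2
        have E0 : RateFT.P1 (RateFT.tA G ψ a) (w 0 - w' 0)
            + c a * RateFT.P2 (RateFT.tA G ψ a) (w 0 - w' 0) = 0 := by
          rw [RateFT.P1_sub, RateFT.P2_sub]; linear_combination e0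
        have F0 : RateFT.P1 (ψ b) (w 0 - w' 0) = 0 := by
          rw [RateFT.P1_sub]; linear_combination f0
        have F1 : RateFT.P2 (ψ b) (w 0 - w' 0) = 0 := by
          rw [RateFT.P2_sub]; linear_combination f1
        have F2 : RateFT.P3 (ψ b) (w 0 - w' 0) = 0 := by
          rw [RateFT.P3_sub]; linear_combination f2
        have hst : RateFT.tA G ψ a ≠ ψ b :=
          RateFT.tA_ne_psi G ψ hψ h2a h2b ⟨a, by simp [hkba]⟩
        have hbadv : (RateFT.tA G ψ a - ψ b) + 3 * c a ≠ 0 := by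
          intro h0
          apply hcbad a h2a
          apply Finset.mem_union_left
          rw [Finset.mem_image]
          refine ⟨b, Finset.mem_filter.mpr ⟨Finset.mem_univ _, hk, h1b⟩, ?_⟩
          have hcc3 : c a * 3 = ψ b - RateFT.tA G ψ a := by linear_combination h0
          rw [← hcc3, mul_assoc, mul_inv_cancel₀ h3, mul_one]
        exact sub_eq_zero.mp (RateFT.one_two h2 hst hbadv F0 F1 F2 E0)
      · -- one0 / two
        have h1a : RateFT.one0P G a := ⟨hca, fun h1 => h2a ⟨hca, h1⟩⟩
        simp only [if_neg h2a, if_pos h1a] at hVa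
        simp only [if_pos h2b] at hVb
        have e0 := congrFun hVa 0
        have e1 := congrFun hVa 1
        have e2 := congrFun hVa 2
        have f0 := congrFun hVb 0
        simp only [Matrix.cons_val_zero, Matrix.cons_val_one, Matrix.head_cons,
          Matrix.cons_val_two, Matrix.tail_cons] at e0 e1 e2 f0
        have E0 : RateFT.P1 (ψ a) (w 0 - w' 0) = 0 := by
          rw [RateFT.P1_sub]; linear_combination e0
        have E1 : RateFT.P2 (ψ a) (w 0 - w' 0) = 0 := by
          rw [RateFT.P2_sub]; linear_combination e1
        have E2 : RateFT.P3 (ψ a) (w 0 - w' 0) = 0 := by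
          rw [RateFT.P3_sub]; linear_combination e2
        have F0 : RateFT.P1 (RateFT.tA G ψ b) (w 0 - w' 0)
            + c b * RateFT.P2 (RateFT.tA G ψ b) (w 0 - w' 0) = 0 := by
          rw [RateFT.P1_sub, RateFT.P2_sub]; linear_combination f0
        have hst : RateFT.tA G ψ b ≠ ψ a :=
          RateFT.tA_ne_psi G ψ hψ h2b h2a ⟨b, by simp [hk]⟩
        have hbadv : (RateFT.tA G ψ b - ψ a) + 3 * c b ≠ 0 := by
          intro h0
          apply hcbad b h2b
          apply Finset.mem_union_left
          rw [Finset.mem_image]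
          refine ⟨a, Finset.mem_filter.mpr ⟨Finset.mem_univ _, hkba, h1a⟩, ?_⟩
          have hcc3 : c b * 3 = ψ a - RateFT.tA G ψ b := by linear_combination h0
          rw [← hcc3, mul_assoc, mul_inv_cancel₀ h3, mul_one]
        exact sub_eq_zero.mp (RateFT.one_two h2 hst hbadv E0 E1 E2 F0)
      · -- one0 / one0
        have h1a : RateFT.one0P G a := ⟨hca, fun h1 => h2a ⟨hca, h1⟩⟩
        have h1b : RateFT.one0P G b := ⟨hcb, fun h1 => h2b ⟨hcb, h1⟩⟩
        simp only [if_neg h2a, if_pos h1a] at hVa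
        simp only [if_neg h2b, if_pos h1b] at hVb
        have e0 := congrFun hVa 0
        have e1 := congrFun hVa 1
        have e2 := congrFun hVa 2
        have f0 := congrFun hVb 0
        have f1 := congrFun hVb 1
        have f2 := congrFun hVb 2
        simp only [Matrix.cons_val_zero, Matrix.cons_val_one, Matrix.head_cons,
          Matrix.cons_val_two, Matrix.tail_cons] at e0 e1 e2 f0 f1 f2
        have E0 : RateFT.P1 (ψ a) (w 0 - w' 0) = 0 := by
          rw [RateFT.P1_sub]; linear_combination e0
        have E1 : RateFT.P2 (ψ a) (w 0 - w' 0) = 0 := by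
          rw [RateFT.P2_sub]; linear_combination e1
        have E2 : RateFT.P3 (ψ a) (w 0 - w' 0) = 0 := by
          rw [RateFT.P3_sub]; linear_combination e2
        have F0 : RateFT.P1 (ψ b) (w 0 - w' 0) = 0 := by
          rw [RateFT.P1_sub]; linear_combination f0
        have F1 : RateFT.P2 (ψ b) (w 0 - w' 0) = 0 := by
          rw [RateFT.P2_sub]; linear_combination f1
        have F2 : RateFT.P3 (ψ b) (w 0 - w' 0) = 0 := by
          rw [RateFT.P3_sub]; linear_combination f2
        have hss : ψ a ≠ ψ b := fun h =>
          hne (hψ ⟨b, by simp [hk]⟩ ⟨a, by simp [hkba]⟩ h)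
        exact sub_eq_zero.mp (RateFT.triple_triple h2 h3 hss E0 E1 E2 F0 F1 F2)
    · -- color 1
      have hca : RateFT.hasC G 1 a := ⟨b, hk⟩
      have hcb : RateFT.hasC G 1 b := ⟨a, hkba⟩
      by_cases h2a : RateFT.twoP G a <;> by_cases h2b : RateFT.twoP G b
      · -- two / two
        simp only [if_pos h2a] at hVa
        simp only [if_pos h2b] at hVb
        have e0 := congrFun hVa 0
        have e1 := congrFun hVa 1
        have e2 := congrFun hVa 2
        have f0 := congrFun hVb 0
        have f1 := congrFun hVb 1
        have f2 := congrFun hVb 2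
        simp only [Matrix.cons_val_zero, Matrix.cons_val_one, Matrix.head_cons,
          Matrix.cons_val_two, Matrix.tail_cons] at e0 e1 e2 f0 f1 f2
        have E0 : RateFT.P1 (RateFT.tA G ψ a) (w 0 - w' 0)
            + c a * RateFT.P2 (RateFT.tA G ψ a) (w 0 - w' 0) = 0 := by
          rw [RateFT.P1_sub, RateFT.P2_sub]; linear_combination e0
        have E1 : RateFT.P1 (RateFT.tB G ψ a) (w 1 - w' 1)
            + c a * RateFT.P2 (RateFT.tB G ψ a) (w 1 - w' 1) = 0 := by
          rw [RateFT.P1_sub, RateFT.P2_sub]; linear_combination e1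
        have E2 : RateFT.P2 (RateFT.tB G ψ a) (w 1 - w' 1)
            + RateFT.P2 (RateFT.tA G ψ a) (w 0 - w' 0) = 0 := by
          rw [RateFT.P2_sub, RateFT.P2_sub]; linear_combination e2
        have htA : RateFT.tA G ψ a = RateFT.tA G ψ b :=
          RateFT.tA_eq_of_adj G ψ h2a h2b hne hk
        have F0 : RateFT.P1 (RateFT.tA G ψ a) (w 0 - w' 0)
            + c b * RateFT.P2 (RateFT.tA G ψ a) (w 0 - w' 0) = 0 := by
          rw [htA, RateFT.P1_sub, RateFT.P2_sub]; linear_combination f0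
        have F1 : RateFT.P1 (RateFT.tB G ψ b) (w 1 - w' 1)
            + c b * RateFT.P2 (RateFT.tB G ψ b) (w 1 - w' 1) = 0 := by
          rw [RateFT.P1_sub, RateFT.P2_sub]; linear_combination f1
        have F2 : RateFT.P2 (RateFT.tB G ψ b) (w 1 - w' 1)
            + RateFT.P2 (RateFT.tA G ψ a) (w 0 - w' 0) = 0 := by
          rw [htA, RateFT.P2_sub, RateFT.P2_sub]; linear_combination f2
        have htB : RateFT.tB G ψ a ≠ RateFT.tB G ψ b :=
          RateFT.tB_ne G ψ hψ hres h2a h2b hk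
        have hcc : c a ≠ c b := fun h => hne (hcinj h2a h2b h)
        exact sub_eq_zero.mp (RateFT.two_two htB hcc E1 E0 E2 F1 F0 F2)
      · -- two / one1
        have h1b : RateFT.one1P G b := ⟨hcb, fun h0 => h2b ⟨h0, hcb⟩⟩
        have h0b : ¬ RateFT.one0P G b := fun h => h.2 hcb
        simp only [if_pos h2a] at hVa
        simp only [if_neg h2b, if_neg h0b, if_pos h1b] at hVb
        have e1 := congrFun hVa 1
        have f0 := congrFun hVb 0
        have f1 := congrFun hVb 1
        have f2 := congrFun hVb 2
        simp only [Matrix.cons_val_zero, Matrix.cons_val_one, Matrix.head_cons,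
          Matrix.cons_val_two, Matrix.tail_cons] at e1 f0 f1 f2
        have E1 : RateFT.P1 (RateFT.tB G ψ a) (w 1 - w' 1)
            + c a * RateFT.P2 (RateFT.tB G ψ a) (w 1 - w' 1) = 0 := by
          rw [RateFT.P1_sub, RateFT.P2_sub]; linear_combination e1
        have F0 : RateFT.P1 (ψ b) (w 1 - w' 1) = 0 := by
          rw [RateFT.P1_sub]; linear_combination f0
        have F1 : RateFT.P2 (ψ b) (w 1 - w' 1) = 0 := by
          rw [RateFT.P2_sub]; linear_combination f1
        have F2 : RateFT.P3 (ψ b) (w 1 - w' 1) = 0 := by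
          rw [RateFT.P3_sub]; linear_combination f2
        have hst : RateFT.tB G ψ a ≠ ψ b :=
          RateFT.tB_ne_psi G ψ hψ h2a h2b ⟨a, by simp [hkba]⟩
        have hbadv : (RateFT.tB G ψ a - ψ b) + 3 * c a ≠ 0 := by
          intro h0
          apply hcbad a h2a
          apply Finset.mem_union_right
          rw [Finset.mem_image]
          refine ⟨b, Finset.mem_filter.mpr ⟨Finset.mem_univ _, hk, h1b⟩, ?_⟩
          have hcc3 : c a * 3 = ψ b - RateFT.tB G ψ a := by linear_combination h0
          rw [← hcc3, mul_assoc, mul_inv_cancel₀ h3, mul_one]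
        exact sub_eq_zero.mp (RateFT.one_two h2 hst hbadv F0 F1 F2 E1)
      · -- one1 / two
        have h1a : RateFT.one1P G a := ⟨hca, fun h0 => h2a ⟨h0, hca⟩⟩
        have h0a : ¬ RateFT.one0P G a := fun h => h.2 hca
        simp only [if_neg h2a, if_neg h0a, if_pos h1a] at hVa
        simp only [if_pos h2b] at hVb
        have e0 := congrFun hVa 0
        have e1 := congrFun hVa 1
        have e2 := congrFun hVa 2
        have f1 := congrFun hVb 1
        simp only [Matrix.cons_val_zero, Matrix.cons_val_one, Matrix.head_cons,
          Matrix.cons_val_two, Matrix.tail_cons] at e0 e1 e2 f1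
        have E0 : RateFT.P1 (ψ a) (w 1 - w' 1) = 0 := by
          rw [RateFT.P1_sub]; linear_combination e0
        have E1 : RateFT.P2 (ψ a) (w 1 - w' 1) = 0 := by
          rw [RateFT.P2_sub]; linear_combination e1
        have E2 : RateFT.P3 (ψ a) (w 1 - w' 1) = 0 := by
          rw [RateFT.P3_sub]; linear_combination e2
        have F1 : RateFT.P1 (RateFT.tB G ψ b) (w 1 - w' 1)
            + c b * RateFT.P2 (RateFT.tB G ψ b) (w 1 - w' 1) = 0 := by
          rw [RateFT.P1_sub, RateFT.P2_sub]; linear_combination f1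
        have hst : RateFT.tB G ψ b ≠ ψ a :=
          RateFT.tB_ne_psi G ψ hψ h2b h2a ⟨b, by simp [hk]⟩
        have hbadv : (RateFT.tB G ψ b - ψ a) + 3 * c b ≠ 0 := by
          intro h0
          apply hcbad b h2b
          apply Finset.mem_union_right
          rw [Finset.mem_image]
          refine ⟨a, Finset.mem_filter.mpr ⟨Finset.mem_univ _, hkba, h1a⟩, ?_⟩
          have hcc3 : c b * 3 = ψ a - RateFT.tB G ψ b := by linear_combination h0
          rw [← hcc3, mul_assoc, mul_inv_cancel₀ h3, mul_one]
        exact sub_eq_zero.mp (RateFT.one_two h2 hst hbadv E0 E1 E2 F1)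
      · -- one1 / one1
        have h1a : RateFT.one1P G a := ⟨hca, fun h0 => h2a ⟨h0, hca⟩⟩
        have h0a : ¬ RateFT.one0P G a := fun h => h.2 hca
        have h1b : RateFT.one1P G b := ⟨hcb, fun h0 => h2b ⟨h0, hcb⟩⟩
        have h0b : ¬ RateFT.one0P G b := fun h => h.2 hcb
        simp only [if_neg h2a, if_neg h0a, if_pos h1a] at hVa
        simp only [if_neg h2b, if_neg h0b, if_pos h1b] at hVb
        have e0 := congrFun hVa 0
        have e1 := congrFun hVa 1
        have e2 := congrFun hVa 2
        have f0 := congrFun hVb 0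
        have f1 := congrFun hVb 1
        have f2 := congrFun hVb 2
        simp only [Matrix.cons_val_zero, Matrix.cons_val_one, Matrix.head_cons,
          Matrix.cons_val_two, Matrix.tail_cons] at e0 e1 e2 f0 f1 f2
        have E0 : RateFT.P1 (ψ a) (w 1 - w' 1) = 0 := by
          rw [RateFT.P1_sub]; linear_combination e0
        have E1 : RateFT.P2 (ψ a) (w 1 - w' 1) = 0 := by
          rw [RateFT.P2_sub]; linear_combination e1
        have E2 : RateFT.P3 (ψ a) (w 1 - w' 1) = 0 := by
          rw [RateFT.P3_sub]; linear_combination e2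
        have F0 : RateFT.P1 (ψ b) (w 1 - w' 1) = 0 := by
          rw [RateFT.P1_sub]; linear_combination f0
        have F1 : RateFT.P2 (ψ b) (w 1 - w' 1) = 0 := by
          rw [RateFT.P2_sub]; linear_combination f1
        have F2 : RateFT.P3 (ψ b) (w 1 - w' 1) = 0 := by
          rw [RateFT.P3_sub]; linear_combination f2
        have hss : ψ a ≠ ψ b := fun h =>
          hne (hψ ⟨b, by simp [hk]⟩ ⟨a, by simp [hkba]⟩ h)
        exact sub_eq_zero.mp (RateFT.triple_triple h2 h3 hss E0 E1 E2 F0 F1 F2)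
  refine ⟨Vf, ?_⟩
  intro i j k hk
  refine ⟨fun z1 z2 => if h : ∃ w, Vf i w = z1 ∧ Vf j w = z2 then h.choose k else 0,
    fun w => ?_⟩
  have hex : ∃ w0, Vf i w0 = Vf i w ∧ Vf j w0 = Vf j w := ⟨w, rfl, rfl⟩
  beta_reduce
  rw [dif_pos hex]
  exact key i j k hk hex.choose w hex.choose_spec.1 hex.choose_spec.2
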